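/- For every fixed integer b ≥ 1, the function s ↦ g(b,s) := max{s,1}·E[min{Pois(b/s),b}]/b on (0,∞) is minimized at s = 1; more precisely, g(b,s) is nonincreasing on (0,1] and nondecreasing on [1,∞). -/

import Mathlib

open Real

noncomputable def poissonPMF (μ : ℝ) (k : ℕ) : ℝ :=
  Real.exp (-μ) * μ ^ k / (Nat.factorial k)

noncomputable def expMinPois (μ : ℝ) (c : ℝ) : ℝ :=
  ∑' k : ℕ, poissonPMF μ k * min (k : ℝ) c

noncomputable def gFun (b : ℕ) (s : ℝ) : ℝ :=
  max s 1 * expMinPois ((b : ℝ) / s) (b : ℝ) / (b : ℝ)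

/-- partial exponential sum -/
noncomputable def eP (b : ℕ) (x : ℝ) : ℝ := ∑ k ∈ Finset.range b, x ^ k / (Nat.factorial k)

/-- weighted polynomial -/
noncomputable def pP (b : ℕ) (x : ℝ) : ℝ :=
  ∑ k ∈ Finset.range b, ((b : ℝ) - k) * x ^ k / (Nat.factorial k)

/-- closed form of `expMinPois` -/
noncomputable def gG (b : ℕ) (x : ℝ) : ℝ := (b : ℝ) - Real.exp (-x) * pP b x

lemma eP_nonneg (b : ℕ) {x : ℝ} (hx : 0 ≤ x) : 0 ≤ eP b x := by
  apply Finset.sum_nonneg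
  intro k _
  positivity

lemma exp_tsum (x : ℝ) : ∑' n : ℕ, x ^ n / (Nat.factorial n) = Real.exp x := by
  rw [Real.exp_eq_exp_ℝ, NormedSpace.exp_eq_tsum_div]

lemma pP_succ (b : ℕ) (x : ℝ) : pP (b + 1) x = pP b x + eP (b + 1) x := by
  unfold pP eP
  push_cast
  have h : ∀ k ∈ Finset.range (b + 1),
      ((b : ℝ) + 1 - k) * x ^ k / (Nat.factorial k)
        = ((b : ℝ) - k) * x ^ k / (Nat.factorial k) + x ^ k / (Nat.factorial k) :=
    fun k _ => by ring
  rw [Finset.sum_congr rfl h, Finset.sum_add_distrib,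
    Finset.sum_range_succ (fun k => ((b : ℝ) - k) * x ^ k / (Nat.factorial k))]
  simp

lemma hasDerivAt_pP (b : ℕ) (x : ℝ) : HasDerivAt (pP (b + 1)) (pP b x) x := by
  have h : ∀ k ∈ Finset.range (b + 1), HasDerivAt
      (fun y : ℝ => (((b : ℝ) + 1) - k) * y ^ k / (Nat.factorial k))
      ((((b : ℝ) + 1) - k) * ((k : ℝ) * x ^ (k - 1)) / (Nat.factorial k)) x :=
    fun k _ => ((hasDerivAt_pow k x).const_mul _).div_const _
  have hsum := HasDerivAt.fun_sum h
  have hfun : pP (b + 1) = fun y : ℝ => ∑ k ∈ Finset.range (b + 1),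
      (((b : ℝ) + 1) - k) * y ^ k / (Nat.factorial k) := by
    funext y; unfold pP; push_cast; rfl
  have key : ∑ k ∈ Finset.range (b + 1),
      (((b : ℝ) + 1) - k) * ((k : ℝ) * x ^ (k - 1)) / (Nat.factorial k) = pP b x := by
    rw [Finset.sum_range_succ'
      (fun k => (((b : ℝ) + 1) - k) * ((k : ℝ) * x ^ (k - 1)) / (Nat.factorial k)) b]
    unfold pP
    have hterm : ∀ k ∈ Finset.range b,
        (((b : ℝ) + 1) - (k + 1 : ℕ)) * (((k + 1 : ℕ) : ℝ) * x ^ (k + 1 - 1)) /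
          (Nat.factorial (k + 1)) = ((b : ℝ) - k) * x ^ k / (Nat.factorial k) := by
      intro k _
      have h1 : (Nat.factorial k : ℝ) ≠ 0 := Nat.cast_ne_zero.2 (Nat.factorial_ne_zero k)
      have h2 : ((k : ℝ) + 1) ≠ 0 := by positivity
      push_cast [Nat.factorial_succ]
      field_simp
      ring
    rw [Finset.sum_congr rfl hterm]
    norm_num
  rw [hfun]
  exact key ▸ hsum

lemma hasDerivAt_gG (b : ℕ) (x : ℝ) :
    HasDerivAt (gG (b + 1)) (Real.exp (-x) * eP (b + 1) x) x := by
  have hexp : HasDerivAt (fun y : ℝ => Real.exp (-y)) (-Real.exp (-x)) x := by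
    simpa [Function.comp_def] using ((Real.hasDerivAt_exp (-x)).comp x (hasDerivAt_neg x))
  have hmul := hexp.mul (hasDerivAt_pP b x)
  have h := (hasDerivAt_const x ((b : ℝ) + 1)).sub hmul
  have hG : gG (b + 1) = fun y : ℝ => ((b : ℝ) + 1) - Real.exp (-y) * pP (b + 1) y := by
    funext y; unfold gG; push_cast; rfl
  rw [hG]
  convert h using 1
  · rfl
  · rfl
  · rfl
  rw [pP_succ]
  ring

lemma sumid (b : ℕ) (x : ℝ) : x * eP b x + pP b x = (b : ℝ) * eP (b + 1) x := by
  induction b with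
  | zero => simp [eP, pP]
  | succ n ih =>
    have heP : eP (n + 1) x = eP n x + x ^ n / (Nat.factorial n) := by
      unfold eP; rw [Finset.sum_range_succ]
    have heP2 : eP (n + 2) x = eP (n + 1) x + x ^ (n + 1) / (Nat.factorial (n + 1)) := by
      unfold eP; rw [Finset.sum_range_succ]
    have h1 : (Nat.factorial n : ℝ) ≠ 0 := Nat.cast_ne_zero.2 (Nat.factorial_ne_zero n)
    have h2 : ((n : ℝ) + 1) ≠ 0 := by positivity
    have hkey : ((n : ℝ) + 1) * (x ^ (n + 1) / (((n : ℝ) + 1) * (Nat.factorial n))) =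
        x ^ (n + 1) / (Nat.factorial n) := by
      field_simp
    rw [pP_succ, heP2]
    push_cast [Nat.factorial_succ]
    linear_combination ih + x * heP - hkey

/-- the closed form of expMinPois -/
lemma expMinPois_eq (b : ℕ) (μ : ℝ) : expMinPois μ (b : ℝ) = gG b μ := by
  classical
  set p : ℕ → ℝ := fun k => Real.exp (-μ) * μ ^ k / (Nat.factorial k) with hp
  have hsum_pow : Summable (fun k : ℕ => μ ^ k / (Nat.factorial k)) :=
    Real.summable_pow_div_factorial μ
  have hsum_h : Summable (fun k : ℕ => p k * (b : ℝ)) := by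
    have := (hsum_pow.mul_left (Real.exp (-μ))).mul_right (b : ℝ)
    convert this using 2 with k
    · rfl
    simp only [hp]; ring
  set d : ℕ → ℝ := fun k => p k * ((b : ℝ) - min (k : ℝ) (b : ℝ)) with hd
  have hd0 : ∀ k ∉ Finset.range b, d k = 0 := by
    intro k hk
    simp only [Finset.mem_range, not_lt] at hk
    have : min (k : ℝ) (b : ℝ) = (b : ℝ) := min_eq_right (by exact_mod_cast hk)
    simp [hd, this]
  have hsum_d : Summable d := summable_of_ne_finset_zero hd0
  have hfun : (fun k : ℕ => poissonPMF μ k * min (k : ℝ) (b : ℝ)) =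
      fun k => p k * (b : ℝ) - d k := by
    funext k; simp only [hd, poissonPMF, hp]; ring
  rw [expMinPois, hfun, Summable.tsum_sub hsum_h hsum_d]
  have h1 : ∑' k : ℕ, p k * (b : ℝ) = Real.exp (-μ) * Real.exp μ * (b : ℝ) := by
    rw [tsum_mul_right]
    congr 1
    have : ∀ k : ℕ, p k = Real.exp (-μ) * (μ ^ k / (Nat.factorial k)) := fun k => by
      simp only [hp]; ring
    simp only [this]
    rw [tsum_mul_left, exp_tsum]
  have h2 : ∑' k : ℕ, d k = Real.exp (-μ) * pP b μ := by
    rw [tsum_eq_sum hd0]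
    unfold pP
    rw [Finset.mul_sum]
    apply Finset.sum_congr rfl
    intro k hk
    simp only [Finset.mem_range] at hk
    have : min (k : ℝ) (b : ℝ) = (k : ℝ) := min_eq_left (by exact_mod_cast hk.le)
    simp only [hd, hp, this]
    ring
  rw [h1, h2, ← Real.exp_add]
  simp [gG]

lemma gG_monotone (b : ℕ) : MonotoneOn (gG (b + 1)) (Set.Ici (0 : ℝ)) := by
  have hdiff : Differentiable ℝ (gG (b + 1)) := fun x => (hasDerivAt_gG b x).differentiableAt
  apply monotoneOn_of_deriv_nonneg (convex_Ici 0) hdiff.continuous.continuousOn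
    hdiff.differentiableOn
  intro x hx
  rw [interior_Ici] at hx
  rw [(hasDerivAt_gG b x).deriv]
  have := eP_nonneg (b + 1) (le_of_lt hx)
  positivity

lemma gG_div_antitone (b : ℕ) : AntitoneOn (fun x => gG (b + 1) x / x) (Set.Ioi (0 : ℝ)) := by
  have hder : ∀ x : ℝ, 0 < x → HasDerivAt (fun y => gG (b + 1) y / y)
      ((Real.exp (-x) * eP (b + 1) x * x - gG (b + 1) x * 1) / x ^ 2) x := by
    intro x hx
    exact (hasDerivAt_gG b x).div (hasDerivAt_id x) (ne_of_gt hx)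
  apply antitoneOn_of_deriv_nonpos (convex_Ioi 0)
  · intro x hx
    exact ((hder x hx).continuousAt).continuousWithinAt
  · intro x hx
    rw [interior_Ioi] at hx
    exact (hder x hx).differentiableAt.differentiableWithinAt
  · intro x hx
    rw [interior_Ioi] at hx
    rw [(hder x hx).deriv]
    apply div_nonpos_of_nonpos_of_nonneg _ (sq_nonneg x)
    have hs := sumid (b + 1) x
    push_cast at hs
    have hnum : Real.exp (-x) * eP (b + 1) x * x - gG (b + 1) x * 1
        = ((b : ℝ) + 1) * (Real.exp (-x) * eP (b + 2) x - 1) := by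
      unfold gG
      push_cast
      linear_combination Real.exp (-x) * hs
    rw [hnum]
    have hle : eP (b + 2) x ≤ Real.exp x := by
      have := Real.sum_le_exp_of_nonneg hx.le (b + 2)
      simpa [eP] using this
    have h1 : Real.exp (-x) * eP (b + 2) x ≤ Real.exp (-x) * Real.exp x :=
      mul_le_mul_of_nonneg_left hle (Real.exp_nonneg _)
    rw [← Real.exp_add] at h1
    simp only [neg_add_cancel, Real.exp_zero] at h1
    have hb0 : (0 : ℝ) ≤ (b : ℝ) + 1 := by positivity
    exact mul_nonpos_of_nonneg_of_nonpos hb0 (by linarith)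

theorem stmt_2 (b : ℕ) (hb : 1 ≤ b) :
    (∀ s : ℝ, 0 < s → gFun b 1 ≤ gFun b s) ∧
    AntitoneOn (gFun b) (Set.Ioc (0 : ℝ) 1) ∧
    MonotoneOn (gFun b) (Set.Ici (1 : ℝ)) := by
  obtain ⟨m, rfl⟩ : ∃ m, b = m + 1 := ⟨b - 1, (Nat.succ_pred_eq_of_pos hb).symm⟩
  set c : ℝ := ((m : ℝ) + 1) with hc
  have hcpos : (0 : ℝ) < c := by positivity
  have hcast : ((m + 1 : ℕ) : ℝ) = c := by push_cast; rfl
  have hgFun : ∀ s : ℝ, gFun (m + 1) s = max s 1 * gG (m + 1) (c / s) / c := by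
    intro s
    unfold gFun
    rw [expMinPois_eq (m + 1), hcast]
  have hanti : AntitoneOn (gFun (m + 1)) (Set.Ioc (0 : ℝ) 1) := by
    intro s hs t ht hst
    rw [hgFun s, hgFun t, max_eq_right hs.2, max_eq_right ht.2, one_mul, one_mul]
    have h1 : c / t ≤ c / s := by
      apply div_le_div_of_nonneg_left hcpos.le hs.1 hst
    have h2 : (0 : ℝ) ≤ c / t := (div_nonneg hcpos.le ht.1.le)
    have h3 : (0 : ℝ) ≤ c / s := le_trans h2 h1
    have hG := gG_monotone m (Set.mem_Ici.2 h2) (Set.mem_Ici.2 h3) h1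
    exact div_le_div_of_nonneg_right hG hcpos.le
  have hmono : MonotoneOn (gFun (m + 1)) (Set.Ici (1 : ℝ)) := by
    intro s hs t ht hst
    have hs0 : (0 : ℝ) < s := lt_of_lt_of_le one_pos hs
    have ht0 : (0 : ℝ) < t := lt_of_lt_of_le one_pos ht
    rw [hgFun s, hgFun t, max_eq_left hs, max_eq_left ht]
    have hrw : ∀ u : ℝ, 0 < u → u * gG (m + 1) (c / u) / c = gG (m + 1) (c / u) / (c / u) := by
      intro u hu
      rw [div_div_eq_mul_div]
      ring
    rw [hrw s hs0, hrw t ht0]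
    have h1 : c / t ≤ c / s := div_le_div_of_nonneg_left hcpos.le hs0 hst
    have h2 : (0 : ℝ) < c / t := div_pos hcpos ht0
    have h3 : (0 : ℝ) < c / s := div_pos hcpos hs0
    exact gG_div_antitone m (Set.mem_Ioi.2 h2) (Set.mem_Ioi.2 h3) h1
  refine ⟨?_, hanti, hmono⟩
  intro s hs
  rcases le_or_gt s 1 with h | h
  · exact hanti ⟨hs, h⟩ ⟨one_pos, le_refl 1⟩ h
  · exact hmono (Set.mem_Ici.2 (le_refl 1)) (Set.mem_Ici.2 h.le) h.le
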